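/- Let a^{(1)}(θ_1), …, a^{(n)}(θ_n) be ground actions over O and g a set of atoms over O such that the iterated regression of g along the sequence is defined, yielding the regressed condition g_0. Let h : O → O' be an injective map fixing constants. Then for every state t over O' with h(g_0) ⊆ t, the renamed sequence a^{(1)}(h ∘ θ_1), …, a^{(n)}(h ∘ θ_n) is applicable from t and h(g) ⊆ succ(t, a^{(1)}(h ∘ θ_1) … a^{(n)}(h ∘ θ_n)). (Soundness of instantiating a rule lifted from a regressed plan on any state satisfying the renamed condition.) -/

import Mathlib

/-- A (lifted) STRIPS domain: predicate symbols with arities, constants, and action schemata,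
each schema with a set of parameter variables and precondition/add/delete sets of predicates
whose arguments are variables of the schema or constants. -/
structure StripsDomain where
  Pred : Type
  arity : Pred → ℕ
  Const : Type
  Schema : Type
  Var : Schema → Type
  pre : (a : Schema) → Set ((p : Pred) × (Fin (arity p) → Var a ⊕ Const))
  add : (a : Schema) → Set ((p : Pred) × (Fin (arity p) → Var a ⊕ Const))
  del : (a : Schema) → Set ((p : Pred) × (Fin (arity p) → Var a ⊕ Const))

variable (D : StripsDomain)

/-- A ground atom over an object type `O`: a predicate applied to objects. -/
abbrev GAtom (O : Type*) : Type _ := (p : D.Pred) × (Fin (D.arity p) → O)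

/-- A ground action over `O`: a schema together with an assignment of objects to its
parameter variables. -/
abbrev GAction (O : Type*) : Type _ := (a : D.Schema) × (D.Var a → O)

/-- Instantiate a schema atom with the assignment `θ`, interpreting constants via `κ`. -/
def instAtom {O : Type*} (κ : D.Const → O) {a : D.Schema} (θ : D.Var a → O)
    (x : (p : D.Pred) × (Fin (D.arity p) → D.Var a ⊕ D.Const)) : GAtom D O :=
  ⟨x.1, fun i => Sum.elim θ κ (x.2 i)⟩

/-- Precondition set of atoms of a ground action. -/
def gpre {O : Type*} (κ : D.Const → O) (ga : GAction D O) : Set (GAtom D O) :=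
  instAtom D κ ga.2 '' D.pre ga.1

/-- Add set of atoms of a ground action. -/
def gadd {O : Type*} (κ : D.Const → O) (ga : GAction D O) : Set (GAtom D O) :=
  instAtom D κ ga.2 '' D.add ga.1

/-- Delete set of atoms of a ground action. -/
def gdel {O : Type*} (κ : D.Const → O) (ga : GAction D O) : Set (GAtom D O) :=
  instAtom D κ ga.2 '' D.del ga.1

/-- A ground action is applicable in a state `s` if its precondition set is contained in `s`. -/
def GApplicable {O : Type*} (κ : D.Const → O) (s : Set (GAtom D O)) (ga : GAction D O) : Prop :=
  gpre D κ ga ⊆ s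

/-- Successor state of `s` under a ground action. -/
def gstep {O : Type*} (κ : D.Const → O) (s : Set (GAtom D O)) (ga : GAction D O) :
    Set (GAtom D O) :=
  (s \ gdel D κ ga) ∪ gadd D κ ga

/-- A renaming `h : O → O'` acting pointwise on ground atoms. -/
def mapAtom {O O' : Type*} (h : O → O') (x : GAtom D O) : GAtom D O' :=
  ⟨x.1, h ∘ x.2⟩

/-- A renaming `h : O → O'` acting on ground actions: `a(θ) ↦ a(h ∘ θ)`. -/
def mapAction {O O' : Type*} (h : O → O') (ga : GAction D O) : GAction D O' :=
  ⟨ga.1, h ∘ ga.2⟩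

/-- `g` is regressable over the ground action `ga`:
`(add set) ∩ g ≠ ∅` and `(delete set) ∩ g = ∅`. -/
def GRegressable {O : Type*} (κ : D.Const → O) (g : Set (GAtom D O)) (ga : GAction D O) : Prop :=
  (gadd D κ ga ∩ g).Nonempty ∧ gdel D κ ga ∩ g = ∅

/-- Regression of `g` over a ground action: `(g \ add set) ∪ precondition set`. -/
def gregr {O : Type*} (κ : D.Const → O) (g : Set (GAtom D O)) (ga : GAction D O) :
    Set (GAtom D O) :=
  (g \ gadd D κ ga) ∪ gpre D κ ga

/-- `GIterRegr D κ l g g₀` : the iterated regression of `g` along the ground action sequence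
`l = a₁, …, aₙ` is defined (setting `gₙ = g`, each `gᵢ` is regressable over `aᵢ` and
`g_{i-1} = regr(gᵢ, aᵢ)`), and its result is `g₀`. -/
inductive GIterRegr {O : Type*} (κ : D.Const → O) :
    List (GAction D O) → Set (GAtom D O) → Set (GAtom D O) → Prop
  | nil (g : Set (GAtom D O)) : GIterRegr κ [] g g
  | cons {ga : GAction D O} {l : List (GAction D O)} {g g₁ : Set (GAtom D O)} :
      GIterRegr κ l g g₁ → GRegressable D κ g₁ ga →
      GIterRegr κ (ga :: l) g (gregr D κ g₁ ga)

/-- Final state after applying a sequence of ground actions. -/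
def gsuccList {O : Type*} (κ : D.Const → O) :
    Set (GAtom D O) → List (GAction D O) → Set (GAtom D O)
  | s, [] => s
  | s, ga :: l => gsuccList κ (gstep D κ s ga) l

/-- The ground action sequence is applicable from `s`. -/
def gAppList {O : Type*} (κ : D.Const → O) : Set (GAtom D O) → List (GAction D O) → Prop
  | _, [] => True
  | s, ga :: l => gpre D κ ga ⊆ s ∧ gAppList κ (gstep D κ s ga) l

lemma mapAtom_instAtom {O O' : Type*} (κ : D.Const → O) (κ' : D.Const → O')
    (h : O → O') (hconst : ∀ c, h (κ c) = κ' c) {a : D.Schema} (θ : D.Var a → O)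
    (x : (p : D.Pred) × (Fin (D.arity p) → D.Var a ⊕ D.Const)) :
    mapAtom D h (instAtom D κ θ x) = instAtom D κ' (h ∘ θ) x := by
  simp only [mapAtom, instAtom]
  congr 1
  funext i
  cases hx : x.2 i <;> simp [hx, hconst]

lemma image_gpre {O O' : Type*} (κ : D.Const → O) (κ' : D.Const → O')
    (h : O → O') (hconst : ∀ c, h (κ c) = κ' c) (ga : GAction D O) :
    mapAtom D h '' gpre D κ ga = gpre D κ' (mapAction D h ga) := by
  simp only [gpre, mapAction, Set.image_image]
  exact Set.image_congr (fun x _ => mapAtom_instAtom D κ κ' h hconst ga.2 x)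

lemma image_gadd {O O' : Type*} (κ : D.Const → O) (κ' : D.Const → O')
    (h : O → O') (hconst : ∀ c, h (κ c) = κ' c) (ga : GAction D O) :
    mapAtom D h '' gadd D κ ga = gadd D κ' (mapAction D h ga) := by
  simp only [gadd, mapAction, Set.image_image]
  exact Set.image_congr (fun x _ => mapAtom_instAtom D κ κ' h hconst ga.2 x)

lemma image_gdel {O O' : Type*} (κ : D.Const → O) (κ' : D.Const → O')
    (h : O → O') (hconst : ∀ c, h (κ c) = κ' c) (ga : GAction D O) :
    mapAtom D h '' gdel D κ ga = gdel D κ' (mapAction D h ga) := by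
  simp only [gdel, mapAction, Set.image_image]
  exact Set.image_congr (fun x _ => mapAtom_instAtom D κ κ' h hconst ga.2 x)

lemma mapAtom_inj {O O' : Type*} {h : O → O'} (hinj : Function.Injective h) :
    Function.Injective (mapAtom D h) := by
  rintro ⟨p, f⟩ ⟨q, g⟩ he
  obtain ⟨rfl, he2⟩ := Sigma.ext_iff.mp he
  exact Sigma.ext rfl (heq_of_eq (funext fun i => hinj (congrFun (eq_of_heq he2) i)))

/-- Soundness of instantiating a rule lifted from a regressed plan: if the iterated regression
of `g` along `a⁽¹⁾(θ₁), …, a⁽ⁿ⁾(θₙ)` is defined with result `g₀`, and `h : O → O'` is injective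
and fixes constants, then for every state `t` over `O'` with `h(g₀) ⊆ t`, the renamed sequence
`a⁽¹⁾(h ∘ θ₁), …, a⁽ⁿ⁾(h ∘ θₙ)` is applicable from `t` and `h(g)` is contained in the final
state. -/
theorem stmt7 {O O' : Type*} (κ : D.Const → O) (κ' : D.Const → O')
    (h : O → O') (hinj : Function.Injective h) (hconst : ∀ c, h (κ c) = κ' c)
    (l : List (GAction D O)) (g g₀ : Set (GAtom D O))
    (hreg : GIterRegr D κ l g g₀)
    (t : Set (GAtom D O')) (ht : mapAtom D h '' g₀ ⊆ t) :
    gAppList D κ' t (l.map (mapAction D h)) ∧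
      mapAtom D h '' g ⊆ gsuccList D κ' t (l.map (mapAction D h)) := by
  induction hreg generalizing t with
  | nil g => exact ⟨trivial, ht⟩
  | @cons ga l g g₁ hrec hregable ih =>
    have hpre : gpre D κ' (mapAction D h ga) ⊆ t := by
      rw [← image_gpre D κ κ' h hconst]
      exact (Set.image_mono (Set.subset_union_right)).trans ht
    have hstep : mapAtom D h '' g₁ ⊆ gstep D κ' t (mapAction D h ga) := by
      rintro _ ⟨x, hx, rfl⟩
      by_cases hadd : x ∈ gadd D κ ga
      · right
        rw [← image_gadd D κ κ' h hconst]
        exact ⟨x, hadd, rfl⟩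
      · left
        constructor
        · apply ht
          exact ⟨x, Or.inl ⟨hx, hadd⟩, rfl⟩
        · rw [← image_gdel D κ κ' h hconst]
          rintro ⟨y, hy, hxy⟩
          have : y = x := mapAtom_inj D hinj hxy
          subst this
          exact Set.eq_empty_iff_forall_notMem.mp hregable.2 y ⟨hy, hx⟩
    obtain ⟨happ, hsub⟩ := ih _ hstep
    exact ⟨⟨hpre, happ⟩, hsub⟩
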